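/- arXiv:1206.5344 — 2 statements merged into one kernel-verified Lean document; each statement's English description precedes it below -/
import Mathlib

section
/- If a symmetric positive definite matrix P satisfies P·Aᵢ + Aᵢᵀ·P ≺ 0 for matrices A₁,…,A_L, and x : ℝ → ℝⁿ solves the differential inclusion ẋ(t) = A(t)x(t) where A(t) ∈ conv{A₁,…,A_L} for all t, then V(t) = x(t)ᵀPx(t) is nonincreasing, and hence ‖x(t)‖ is bounded by √(λ_max(P)/λ_min(P))·‖x(0)‖ for all t ≥ 0. -/
open Matrix

section aux

variable {n : ℕ} [NeZero n]

lemma sum_mulVec' {ι : Type*} (s : Finset ι) (M : ι → Matrix (Fin n) (Fin n) ℝ)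
    (v : Fin n → ℝ) : (∑ i ∈ s, M i) *ᵥ v = ∑ i ∈ s, M i *ᵥ v := by
  classical
  induction s using Finset.induction_on with
  | empty => simp
  | insert _ _ h ih => rw [Finset.sum_insert h, Finset.sum_insert h, Matrix.add_mulVec, ih]

lemma dotProduct_sum' {ι : Type*} (s : Finset ι) (x : Fin n → ℝ) (w : ι → Fin n → ℝ) :
    x ⬝ᵥ (∑ i ∈ s, w i) = ∑ i ∈ s, x ⬝ᵥ w i := by
  classical
  induction s using Finset.induction_on with
  | empty => simp
  | insert _ _ h ih => rw [Finset.sum_insert h, Finset.sum_insert h, dotProduct_add, ih]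

/-- Quadratic form bounds by extreme eigenvalues, for a real symmetric matrix. -/
lemma quad_bounds {P : Matrix (Fin n) (Fin n) ℝ} (hH : P.IsHermitian) (x : Fin n → ℝ) :
    (Finset.univ.inf' Finset.univ_nonempty hH.eigenvalues) * (x ⬝ᵥ x) ≤ x ⬝ᵥ (P *ᵥ x) ∧
    x ⬝ᵥ (P *ᵥ x) ≤ (Finset.univ.sup' Finset.univ_nonempty hH.eigenvalues) * (x ⬝ᵥ x) := by
  classical
  set U : Matrix (Fin n) (Fin n) ℝ := (hH.eigenvectorUnitary : Matrix (Fin n) (Fin n) ℝ) with hU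
  have hsU : star U = Uᵀ := by
    ext i j; simp [Matrix.star_eq_conjTranspose, Matrix.conjTranspose_apply]
  set y : Fin n → ℝ := star U *ᵥ x with hy
  have hUU : U * star U = 1 := (Matrix.mem_unitaryGroup_iff).mp hH.eigenvectorUnitary.2
  have hdiag : RCLike.ofReal ∘ hH.eigenvalues = hH.eigenvalues := by
    funext i; simp
  have hvm : x ᵥ* U = y := by rw [hy, hsU, Matrix.mulVec_transpose]
  have hxx : x ⬝ᵥ x = y ⬝ᵥ y := by
    calc x ⬝ᵥ x = x ⬝ᵥ ((U * star U) *ᵥ x) := by rw [hUU, one_mulVec]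
      _ = x ⬝ᵥ (U *ᵥ (star U *ᵥ x)) := by rw [mulVec_mulVec]
      _ = (x ᵥ* U) ⬝ᵥ (star U *ᵥ x) := dotProduct_mulVec _ _ _
      _ = y ⬝ᵥ y := by rw [hvm, ← hy]
  have hqx : x ⬝ᵥ (P *ᵥ x) = ∑ i, hH.eigenvalues i * (y i * y i) := by
    conv_lhs => rw [hH.spectral_theorem]
    rw [Unitary.conjStarAlgAut_apply, hdiag, ← mulVec_mulVec, ← mulVec_mulVec, dotProduct_mulVec, hvm, ← hy]
    simp only [dotProduct, Matrix.mulVec_diagonal]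
    exact Finset.sum_congr rfl fun i _ => by ring
  constructor
  · rw [hxx, hqx]
    simp only [dotProduct]
    rw [Finset.mul_sum]
    exact Finset.sum_le_sum fun i _ => mul_le_mul_of_nonneg_right
      (Finset.inf'_le _ (Finset.mem_univ i)) (mul_self_nonneg _)
  · rw [hxx, hqx]
    simp only [dotProduct]
    rw [Finset.mul_sum]
    exact Finset.sum_le_sum fun i _ => mul_le_mul_of_nonneg_right
      (Finset.le_sup' _ (Finset.mem_univ i)) (mul_self_nonneg _)

end aux

/-- If `P = Pᵀ ≻ 0` with `P Aᵢ + Aᵢᵀ P ≺ 0` and `x` solves `ẋ = A(t)x` with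
`A(t) ∈ conv{A₁,…,A_L}`, then `V(t) = x(t)ᵀPx(t)` is nonincreasing and
`‖x(t)‖ ≤ √(λ_max(P)/λ_min(P)) ‖x(0)‖` for all `t ≥ 0`. -/
theorem stmt4 {n L : ℕ} [NeZero n] (A : Fin L → Matrix (Fin n) (Fin n) ℝ)
    (P : Matrix (Fin n) (Fin n) ℝ) (hP : P.PosDef)
    (hneg : ∀ i, (-(P * A i + (A i)ᵀ * P)).PosDef)
    (Af : ℝ → Matrix (Fin n) (Fin n) ℝ)
    (hAf : ∀ t, ∃ c : Fin L → ℝ, (∀ i, 0 ≤ c i) ∧ ∑ i, c i = 1 ∧ Af t = ∑ i, c i • A i)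
    (x : ℝ → Fin n → ℝ) (hx : ∀ t, HasDerivAt x (Af t *ᵥ x t) t) :
    (∀ s t : ℝ, 0 ≤ s → s ≤ t → x t ⬝ᵥ (P *ᵥ x t) ≤ x s ⬝ᵥ (P *ᵥ x s)) ∧
    (∀ t ≥ (0:ℝ), Real.sqrt (x t ⬝ᵥ x t) ≤
      Real.sqrt ((Finset.univ.sup' Finset.univ_nonempty hP.1.eigenvalues) /
        (Finset.univ.inf' Finset.univ_nonempty hP.1.eigenvalues)) *
        Real.sqrt (x 0 ⬝ᵥ x 0)) := by
  classical
  set V : ℝ → ℝ := fun t => x t ⬝ᵥ (P *ᵥ x t) with hV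
  set V' : ℝ → ℝ := fun t => (Af t *ᵥ x t) ⬝ᵥ (P *ᵥ x t) + x t ⬝ᵥ (P *ᵥ (Af t *ᵥ x t))
    with hV'
  have hx' : ∀ t i, HasDerivAt (fun s => x s i) ((Af t *ᵥ x t) i) t :=
    fun t i => hasDerivAt_pi.mp (hx t) i
  have hPx : ∀ t j, HasDerivAt (fun s => (P *ᵥ x s) j) ((P *ᵥ (Af t *ᵥ x t)) j) t := by
    intro t j
    simpa [Matrix.mulVec, dotProduct] using
      HasDerivAt.fun_sum (fun k (_ : k ∈ Finset.univ) => (hx' t k).const_mul (P j k))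
  have hVd : ∀ t, HasDerivAt V (V' t) t := by
    intro t
    have := HasDerivAt.fun_sum (fun j (_ : j ∈ Finset.univ) => (hx' t j).mul (hPx t j))
    simpa [hV, hV', dotProduct, Finset.sum_add_distrib] using this
  have hV'le : ∀ t, V' t ≤ 0 := by
    intro t
    obtain ⟨c, hc0, hc1, hcA⟩ := hAf t
    show (Af t *ᵥ x t) ⬝ᵥ (P *ᵥ x t) + x t ⬝ᵥ (P *ᵥ (Af t *ᵥ x t)) ≤ 0
    have e1 : (Af t *ᵥ x t) ⬝ᵥ (P *ᵥ x t) = x t ⬝ᵥ (((Af t)ᵀ * P) *ᵥ x t) := by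
      conv_rhs => rw [← mulVec_mulVec, dotProduct_mulVec, Matrix.vecMul_transpose]
    have e2 : x t ⬝ᵥ (P *ᵥ (Af t *ᵥ x t)) = x t ⬝ᵥ ((P * Af t) *ᵥ x t) := by
      rw [mulVec_mulVec]
    have hsum : (Af t)ᵀ * P + P * Af t = ∑ i, c i • ((A i)ᵀ * P + P * A i) := by
      rw [hcA]
      simp [Matrix.transpose_sum, Matrix.transpose_smul, Finset.sum_mul, Finset.mul_sum,
        Matrix.smul_mul, Matrix.mul_smul, smul_add, Finset.sum_add_distrib]
    have key : (Af t *ᵥ x t) ⬝ᵥ (P *ᵥ x t) + x t ⬝ᵥ (P *ᵥ (Af t *ᵥ x t))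
        = ∑ i, c i * (x t ⬝ᵥ (((A i)ᵀ * P + P * A i) *ᵥ x t)) := by
      rw [e1, e2, ← dotProduct_add, ← Matrix.add_mulVec, hsum, sum_mulVec', dotProduct_sum']
      exact Finset.sum_congr rfl fun i _ => by
        rw [Matrix.smul_mulVec, dotProduct_smul, smul_eq_mul]
    rw [key]
    refine Finset.sum_nonpos fun i _ => mul_nonpos_of_nonneg_of_nonpos (hc0 i) ?_
    have h0 : (0:ℝ) ≤ x t ⬝ᵥ ((-(P * A i + (A i)ᵀ * P)) *ᵥ x t) := by
      simpa using (hneg i).posSemidef.re_dotProduct_nonneg (x t)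
    have hid : x t ⬝ᵥ ((-(P * A i + (A i)ᵀ * P)) *ᵥ x t)
        = -(x t ⬝ᵥ (((A i)ᵀ * P + P * A i) *ᵥ x t)) := by
      rw [Matrix.neg_mulVec, dotProduct_neg, add_comm (P * A i)]
    rw [hid] at h0
    linarith
  have hanti : Antitone V := antitone_of_hasDerivAt_nonpos hVd hV'le
  refine ⟨fun s t _ hst => hanti hst, ?_⟩
  intro t ht
  set m := Finset.univ.inf' Finset.univ_nonempty hP.1.eigenvalues with hm
  set M := Finset.univ.sup' Finset.univ_nonempty hP.1.eigenvalues with hM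
  have hmpos : 0 < m := by
    rw [hm]
    exact (Finset.lt_inf'_iff _).mpr fun i _ => hP.eigenvalues_pos i
  have h1 : m * (x t ⬝ᵥ x t) ≤ V t := (quad_bounds hP.1 (x t)).1
  have h2 : V 0 ≤ M * (x 0 ⬝ᵥ x 0) := (quad_bounds hP.1 (x 0)).2
  have h3 : V t ≤ V 0 := hanti ht
  have h4 : x t ⬝ᵥ x t ≤ (M / m) * (x 0 ⬝ᵥ x 0) := by
    rw [div_mul_eq_mul_div, le_div_iff₀ hmpos, mul_comm (x t ⬝ᵥ x t) m]
    exact h1.trans (h3.trans h2)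
  have hMpos : 0 < M := by
    have i0 : Fin n := Classical.arbitrary (Fin n)
    exact lt_of_lt_of_le (hP.eigenvalues_pos i0) (Finset.le_sup' _ (Finset.mem_univ i0))
  have hMm : (0:ℝ) ≤ M / m := div_nonneg hMpos.le hmpos.le
  calc Real.sqrt (x t ⬝ᵥ x t) ≤ Real.sqrt ((M / m) * (x 0 ⬝ᵥ x 0)) := Real.sqrt_le_sqrt h4
    _ = Real.sqrt (M / m) * Real.sqrt (x 0 ⬝ᵥ x 0) := Real.sqrt_mul hMm _
end

section
/- Suppose a continuous nonlinear vector field F : ℝⁿ → ℝⁿ with F(0) = 0 satisfies: for every x, the Jacobian DF(x) belongs to a polytope S = conv{A₁,…,A_L}, and there exists P = Pᵀ ≻ 0 with PAᵢ + AᵢᵀP ≺ 0 for all i. Then xᵀPF(x) < 0 for all x ≠ 0 (so V(x) = xᵀPx is a strict Lyapunov function for ẋ = F(x)). -/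
open Matrix

/-- For a single vertex matrix: the quadratic form `xᵀ P A x` is negative. -/
lemma quad_neg {n : ℕ} (Ai P : Matrix (Fin n) (Fin n) ℝ) (hP : P.PosDef)
    (hneg : (-(P * Ai + Aiᵀ * P)).PosDef) {x : Fin n → ℝ} (hx : x ≠ 0) :
    x ⬝ᵥ (P *ᵥ (Ai *ᵥ x)) < 0 := by
  have h := hneg.dotProduct_mulVec_pos hx
  simp only [RCLike.re_to_real, star_trivial] at h
  have hsym : Pᵀ = P := hP.isHermitian
  have e1 : x ⬝ᵥ ((Aiᵀ * P) *ᵥ x) = x ⬝ᵥ ((P * Ai) *ᵥ x) := by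
    have : (Aiᵀ * P)ᵀ = P * Ai := by
      rw [Matrix.transpose_mul, Matrix.transpose_transpose, hsym]
    calc x ⬝ᵥ ((Aiᵀ * P) *ᵥ x) = ((Aiᵀ * P)ᵀ *ᵥ x) ⬝ᵥ x := by
          rw [Matrix.dotProduct_mulVec, ← Matrix.vecMul_transpose,
            Matrix.transpose_transpose]
      _ = x ⬝ᵥ ((P * Ai) *ᵥ x) := by
          rw [this, dotProduct_comm]
  rw [Matrix.neg_mulVec, dotProduct_neg, Matrix.add_mulVec,
    dotProduct_add, e1] at h
  rw [Matrix.mulVec_mulVec]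
  linarith

/-- Global linearization: if `F` is `C¹`, `F(0) = 0`, the Jacobian `DF(x)` lies in the
polytope `conv{A₁,…,A_L}` for every `x`, and `P = Pᵀ ≻ 0` satisfies `P Aᵢ + Aᵢᵀ P ≺ 0`
for each `i`, then `xᵀ P F(x) < 0` for all `x ≠ 0`. -/
theorem stmt5 {n L : ℕ} (F : (Fin n → ℝ) → (Fin n → ℝ))
    (hF : ContDiff ℝ 1 F) (hF0 : F 0 = 0)
    (A : Fin L → Matrix (Fin n) (Fin n) ℝ)
    (P : Matrix (Fin n) (Fin n) ℝ) (hP : P.PosDef)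
    (hneg : ∀ i, (-(P * A i + (A i)ᵀ * P)).PosDef)
    (hDF : ∀ x : Fin n → ℝ, ∃ c : Fin L → ℝ, (∀ i, 0 ≤ c i) ∧ ∑ i, c i = 1 ∧
      LinearMap.toMatrix' ((fderiv ℝ F x : (Fin n → ℝ) →L[ℝ] (Fin n → ℝ)) :
        (Fin n → ℝ) →ₗ[ℝ] (Fin n → ℝ)) = ∑ i, c i • A i) :
    ∀ x : Fin n → ℝ, x ≠ 0 → x ⬝ᵥ (P *ᵥ F x) < 0 := by
  intro x hx
  -- the continuous linear functional  v ↦ x ⬝ᵥ (P *ᵥ v)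
  set lin : (Fin n → ℝ) →ₗ[ℝ] ℝ :=
    { toFun := fun v => x ⬝ᵥ (P *ᵥ v)
      map_add' := by intro a b; simp [Matrix.mulVec_add, dotProduct_add]
      map_smul' := by intro c a; simp [Matrix.mulVec_smul, dotProduct_smul] }
    with hlin
  set ℓ : (Fin n → ℝ) →L[ℝ] ℝ := LinearMap.toContinuousLinearMap lin with hℓ
  -- pointwise estimate on the derivative
  have key : ∀ y : Fin n → ℝ, x ⬝ᵥ (P *ᵥ ((fderiv ℝ F y : (Fin n → ℝ) →L[ℝ] (Fin n → ℝ)) x)) < 0 := by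
    intro y
    obtain ⟨c, hc0, hc1, hcM⟩ := hDF y
    have hApp : (fderiv ℝ F y : (Fin n → ℝ) →L[ℝ] (Fin n → ℝ)) x
        = ∑ i, c i • (A i *ᵥ x) := by
      have h2 : Matrix.toLin' (∑ i, c i • A i) x
          = ((fderiv ℝ F y : (Fin n → ℝ) →L[ℝ] (Fin n → ℝ)) :
              (Fin n → ℝ) →ₗ[ℝ] (Fin n → ℝ)) x := by
        rw [← hcM, Matrix.toLin'_toMatrix']
      simpa [Matrix.toLin'_apply] using h2.symm
    rw [hApp]
    have hsum : x ⬝ᵥ (P *ᵥ (∑ i, c i • (A i *ᵥ x)))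
        = ∑ i, c i * (x ⬝ᵥ (P *ᵥ (A i *ᵥ x))) := by
      show lin (∑ i, c i • (A i *ᵥ x)) = _
      rw [map_sum]
      congr 1; ext i
      rw [_root_.map_smul, smul_eq_mul]
      rfl
    rw [hsum]
    -- some coefficient is positive
    have hex : ∃ i, 0 < c i := by
      by_contra h
      push_neg at h
      have : ∑ i, c i = 0 := Finset.sum_eq_zero fun i _ => le_antisymm (h i) (hc0 i)
      rw [hc1] at this; norm_num at this
    obtain ⟨j, hj⟩ := hex
    have hterm : ∀ i, x ⬝ᵥ (P *ᵥ (A i *ᵥ x)) < 0 := fun i =>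
      quad_neg (A i) P hP (hneg i) hx
    have : ∑ i, c i * (x ⬝ᵥ (P *ᵥ (A i *ᵥ x))) < ∑ i : Fin L, c i * 0 := by
      apply Finset.sum_lt_sum
      · intro i _
        exact mul_le_mul_of_nonneg_left (le_of_lt (hterm i)) (hc0 i)
      · exact ⟨j, Finset.mem_univ j, by
          exact mul_lt_mul_of_pos_left (hterm j) hj⟩
    simpa using this
  -- the function g(t) = xᵀ P F(t x)
  set g : ℝ → ℝ := fun t => x ⬝ᵥ (P *ᵥ F (t • x)) with hg
  have hdiff : Differentiable ℝ F := hF.differentiable one_ne_zero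
  have hderiv : ∀ t : ℝ, HasDerivAt g
      (x ⬝ᵥ (P *ᵥ ((fderiv ℝ F (t • x) : (Fin n → ℝ) →L[ℝ] (Fin n → ℝ)) x))) t := by
    intro t
    have h1 : HasDerivAt (fun s : ℝ => s • x) x t := by
      simpa using (hasDerivAt_id t).smul_const x
    have h2 : HasDerivAt (fun s : ℝ => F (s • x))
        ((fderiv ℝ F (t • x) : (Fin n → ℝ) →L[ℝ] (Fin n → ℝ)) x) t := by
      have := (hdiff (t • x)).hasFDerivAt.comp_hasDerivAt t h1
      exact this
    have h3 := ℓ.hasFDerivAt.comp_hasDerivAt t h2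
    exact h3
  have hcont : ContinuousOn g (Set.Icc 0 1) :=
    (Continuous.continuousOn (by
      apply Continuous.dotProduct continuous_const
      exact (continuous_const.matrix_mulVec (hF.continuous.comp (continuous_id.smul continuous_const)))))
  obtain ⟨θ, hθ, hslope⟩ := exists_hasDerivAt_eq_slope g
    (fun t => x ⬝ᵥ (P *ᵥ ((fderiv ℝ F (t • x) : (Fin n → ℝ) →L[ℝ] (Fin n → ℝ)) x)))
    zero_lt_one hcont (fun t _ => hderiv t)
  have hg0 : g 0 = 0 := by simp [hg, hF0]
  have hg1 : g 1 = x ⬝ᵥ (P *ᵥ F x) := by simp [hg]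
  rw [hg0, hg1] at hslope
  have := key (θ • x)
  rw [hslope] at this
  simpa using this
end
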